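/- Let m ≠ n be positive integers, a, b ∈ ℂ, and T > 0. If the composition of the first return maps P_m(a)(r) = r(1 - m a T r^m)^{-1/m} and P_n(b)(r) = r(1 - n b T r^n)^{-1/n} equals the identity series r (as formal power series), then a = 0 and b = 0. -/

import Mathlib

open Finset

/-- Composition `f ∘ g` of formal power series (valid when `g` has zero constant term). -/
noncomputable def psComp (f g : PowerSeries ℂ) : PowerSeries ℂ :=
  PowerSeries.mk fun d =>
    ∑ n ∈ Finset.range (d + 1), PowerSeries.coeff n f * PowerSeries.coeff d (g ^ n)

/-- The first return map `P_n(a)(r) = r (1 - n a T r^n)^{-1/n}` as a formal power series,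
via the generalized binomial expansion. -/
noncomputable def returnMap (n : ℕ) (T : ℝ) (a : ℂ) : PowerSeries ℂ :=
  PowerSeries.mk fun m =>
    if 1 ≤ m ∧ n ∣ (m - 1) then
      ((∏ i ∈ Finset.range ((m - 1) / n), ((n : ℂ) * i + 1)) / (((m - 1) / n).factorial : ℂ))
        * ((a * T) ^ ((m - 1) / n))
    else 0

lemma rm_coeff0 (n : ℕ) (T : ℝ) (a : ℂ) : PowerSeries.coeff 0 (returnMap n T a) = 0 := by
  simp [returnMap]

lemma rm_coeff1 (n : ℕ) (T : ℝ) (a : ℂ) : PowerSeries.coeff 1 (returnMap n T a) = 1 := by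
  simp [returnMap]

lemma rm_coeff_succ (n : ℕ) (hn : 1 ≤ n) (T : ℝ) (a : ℂ) :
    PowerSeries.coeff (n + 1) (returnMap n T a) = a * T := by
  simp [returnMap, Nat.div_self hn]

lemma rm_coeff_ndvd (n : ℕ) (T : ℝ) (a : ℂ) (d : ℕ) (hd : ¬ n ∣ (d - 1)) :
    PowerSeries.coeff d (returnMap n T a) = 0 := by
  simp [returnMap, hd]

lemma pow_coeff_lt (g : PowerSeries ℂ) (h0 : PowerSeries.constantCoeff g = 0)
    (j d : ℕ) (hd : d < j) : PowerSeries.coeff d (g ^ j) = 0 := by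
  obtain ⟨h, rfl⟩ := PowerSeries.X_dvd_iff.mpr h0
  rw [mul_pow, PowerSeries.coeff_X_pow_mul']
  simp [Nat.not_le.mpr hd]

lemma pow_coeff_diag (g : PowerSeries ℂ) (h0 : PowerSeries.constantCoeff g = 0) (j : ℕ) :
    PowerSeries.coeff j (g ^ j) = (PowerSeries.coeff 1 g) ^ j := by
  obtain ⟨h, rfl⟩ := PowerSeries.X_dvd_iff.mpr h0
  rw [mul_pow]
  have := PowerSeries.coeff_X_pow_mul (h ^ j) j 0
  rw [zero_add] at this
  rw [this]
  have h1 : (PowerSeries.coeff 1) (PowerSeries.X * h) = PowerSeries.coeff 0 h := by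
    have := PowerSeries.coeff_X_pow_mul h 1 0
    simpa using this
  rw [h1]
  simp [PowerSeries.coeff_zero_eq_constantCoeff, map_pow]

lemma rm_zero (n : ℕ) (T : ℝ) : returnMap n T 0 = PowerSeries.X := by
  ext d
  rw [PowerSeries.coeff_X]
  by_cases hd : d = 1
  · subst hd; simp [rm_coeff1]
  · rw [if_neg hd]
    rcases Nat.lt_or_ge d 1 with h1 | h1
    · interval_cases d; exact rm_coeff0 n T 0
    · by_cases hdvd : n ∣ (d - 1)
      · have hpos : 0 < (d - 1) / n := by
          rcases Nat.eq_zero_or_pos n with rfl | hn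
          · simp only [Nat.zero_dvd] at hdvd; omega
          · exact Nat.div_pos (Nat.le_of_dvd (by omega) hdvd) hn
        simp [returnMap, h1, hdvd, zero_pow (by omega : (d - 1) / n ≠ 0)]
      · exact rm_coeff_ndvd n T 0 d hdvd

lemma comp_coeff (f g : PowerSeries ℂ) (d : ℕ) :
    PowerSeries.coeff d (psComp f g) =
      ∑ j ∈ Finset.range (d + 1), PowerSeries.coeff j f * PowerSeries.coeff d (g ^ j) := by
  simp [psComp]

lemma comp_X (f : PowerSeries ℂ) : psComp f PowerSeries.X = f := by
  ext d
  rw [comp_coeff]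
  rw [Finset.sum_eq_single d]
  · rw [PowerSeries.coeff_X_pow, if_pos rfl, mul_one]
  · intro j _ hj
    rw [PowerSeries.coeff_X_pow, if_neg (Ne.symm hj), mul_zero]
  · intro hd; exact absurd (Finset.self_mem_range_succ d) hd

lemma X_comp (g : PowerSeries ℂ) (h0 : PowerSeries.constantCoeff g = 0) :
    psComp PowerSeries.X g = g := by
  ext d
  rw [comp_coeff]
  rcases Nat.eq_zero_or_pos d with rfl | hd
  · simpa [PowerSeries.coeff_zero_eq_constantCoeff] using h0.symm
  · rw [Finset.sum_eq_single 1]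
    · simp
    · intro j _ hj
      rw [PowerSeries.coeff_X, if_neg hj, zero_mul]
    · intro hmem; exact absurd (Finset.mem_range.mpr (by omega)) hmem

/-- If `m ≠ n` are positive integers and the composition of the first return maps
`P_m(a)` and `P_n(b)` equals the identity series `r`, then `a = 0` and `b = 0`. -/
theorem stmt7 (m n : ℕ) (hm : 1 ≤ m) (hn : 1 ≤ n) (hmn : m ≠ n) (a b : ℂ) (T : ℝ)
    (hT : 0 < T)
    (h : psComp (returnMap m T a) (returnMap n T b) = PowerSeries.X) :
    a = 0 ∧ b = 0 := by
  have hTc : (T : ℂ) ≠ 0 := by exact_mod_cast ne_of_gt hT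
  rcases Nat.lt_or_ge n m with hlt | hge
  · -- n < m : look at coefficient n+1
    have hc := congrArg (PowerSeries.coeff (n + 1)) h
    rw [comp_coeff, PowerSeries.coeff_X, if_neg (by omega)] at hc
    rw [Finset.sum_eq_single 1] at hc
    · rw [rm_coeff1, one_mul, pow_one, rm_coeff_succ n hn] at hc
      have hb : b = 0 := by
        rcases mul_eq_zero.mp hc with h' | h'
        · exact h'
        · exact absurd h' hTc
      subst hb
      rw [rm_zero, comp_X] at h
      have hc2 := congrArg (PowerSeries.coeff (m + 1)) h
      rw [rm_coeff_succ m hm, PowerSeries.coeff_X, if_neg (by omega)] at hc2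
      rcases mul_eq_zero.mp hc2 with h' | h'
      · exact ⟨h', rfl⟩
      · exact absurd h' hTc
    · intro j hj hj1
      rcases Nat.eq_zero_or_pos j with rfl | hjpos
      · rw [show PowerSeries.coeff 0 (returnMap m T a) = 0 from rm_coeff0 m T a, zero_mul]
      · have : ¬ m ∣ (j - 1) := by
          intro hdvd
          have hle := Nat.le_of_dvd (by omega) hdvd
          rw [Finset.mem_range] at hj
          omega
        rw [rm_coeff_ndvd m T a j this, zero_mul]
    · intro hmem; exact absurd (Finset.mem_range.mpr (by omega)) hmem
  · -- m < n : look at coefficient m+1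
    have hlt : m < n := lt_of_le_of_ne hge hmn
    have hc := congrArg (PowerSeries.coeff (m + 1)) h
    rw [comp_coeff, PowerSeries.coeff_X, if_neg (by omega)] at hc
    rw [Finset.sum_eq_single (m + 1)] at hc
    · rw [rm_coeff_succ m hm,
        pow_coeff_diag _ (by simpa [PowerSeries.coeff_zero_eq_constantCoeff] using rm_coeff0 n T b),
        rm_coeff1, one_pow, mul_one] at hc
      have ha : a = 0 := by
        rcases mul_eq_zero.mp hc with h' | h'
        · exact h'
        · exact absurd h' hTc
      subst ha
      rw [rm_zero, X_comp _ (by simpa [PowerSeries.coeff_zero_eq_constantCoeff] using rm_coeff0 n T b)] at h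
      have hc2 := congrArg (PowerSeries.coeff (n + 1)) h
      rw [rm_coeff_succ n hn, PowerSeries.coeff_X, if_neg (by omega)] at hc2
      rcases mul_eq_zero.mp hc2 with h' | h'
      · exact ⟨rfl, h'⟩
      · exact absurd h' hTc
    · intro j hj hj1
      rcases Nat.eq_zero_or_pos j with rfl | hjpos
      · rw [show PowerSeries.coeff 0 (returnMap m T a) = 0 from rm_coeff0 m T a, zero_mul]
      · rcases Nat.eq_or_lt_of_le hjpos with rfl | hj2
        · -- j = 1
          rw [pow_one, rm_coeff_ndvd n T b (m + 1) (by
            intro hdvd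
            have hle := Nat.le_of_dvd (by omega) hdvd
            omega), mul_zero]
        · have : ¬ m ∣ (j - 1) := by
            intro hdvd
            have hle := Nat.le_of_dvd (by omega) hdvd
            rw [Finset.mem_range] at hj
            rcases hdvd with ⟨c, hcc⟩
            rcases Nat.lt_or_ge c 2 with hh | hh
            · interval_cases c <;> omega
            · omega
          rw [rm_coeff_ndvd m T a j this, zero_mul]
    · intro hmem; exact absurd (Finset.mem_range.mpr (by omega)) hmem
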